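/- Let a : ℤ → ℂ^{r×r} be a finitely supported matrix-valued mask, v : ℤ → ℂ^{1×r} finitely supported, m ∈ ℕ, and p⃗ := ((·)^m/m!) * v. If the condition v̂(2ξ) â(ξ+π) = O(|ξ|^{m+1}) as ξ → 0 holds (meaning all derivatives of order ≤ m of ξ ↦ v̂(2ξ)â(ξ+π) vanish at ξ = 0), then S_a p⃗ is a vector polynomial of degree at most m, and moreover S_a p⃗ = (p⃗(·/2)) * a, where the subdivision operator is (S_a w)(j) := 2 ∑_{k∈ℤ} w(k) a(j − 2k) and (q⃗ * a)(x) := ∑_{k∈ℤ} q⃗(x−k) a(k). -/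

import Mathlib

open Complex Polynomial

/-- Symbol (Fourier series) of a scalar sequence. -/
noncomputable def symb (u : ℤ → ℂ) (ξ : ℂ) : ℂ :=
  ∑ᶠ k : ℤ, u k * Complex.exp (-Complex.I * k * ξ)

/-- Entrywise symbol of a matrix-valued sequence. -/
noncomputable def symbM {r : ℕ} (a : ℤ → Fin r → Fin r → ℂ) (i ℓ : Fin r) (ξ : ℂ) : ℂ :=
  ∑ᶠ k : ℤ, a k i ℓ * Complex.exp (-Complex.I * k * ξ)

/-- Vector subdivision operator `(S_a w)(j) := 2 ∑_k w(k) a(j − 2k)` on row-vector sequences. -/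
noncomputable def sd {r : ℕ} (a : ℤ → Fin r → Fin r → ℂ) (w : ℤ → Fin r → ℂ) :
    ℤ → Fin r → ℂ :=
  fun j ℓ => 2 * ∑ᶠ k : ℤ, ∑ i : Fin r, w k i * a (j - 2 * k) i ℓ

/-- Convolution of a polynomial with a finitely supported sequence, as a polynomial. -/
noncomputable def pconv (q : Polynomial ℂ) (u : ℤ → ℂ) : Polynomial ℂ :=
  ∑ᶠ k : ℤ, u k • (q.comp (Polynomial.X - Polynomial.C (k : ℂ)))

noncomputable def sgn (n : ℤ) : ℂ := if Even n then 1 else -1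

lemma sgn_sub (x n : ℤ) : sgn (x - n) = sgn x * sgn n := by
  unfold sgn
  by_cases hx : Even x <;> by_cases hn : Even n <;> simp [Int.even_sub, hx, hn]

lemma exp_pi (n : ℤ) : Complex.exp (-Complex.I * n * (Real.pi : ℂ)) = sgn n := by
  rcases Int.even_or_odd n with ⟨q, hq⟩ | ⟨q, hq⟩
  · have h : -Complex.I * n * (Real.pi : ℂ) = (-q : ℤ) * (2 * Real.pi * Complex.I) := by
      subst hq; push_cast; ring
    rw [h, Complex.exp_int_mul_two_pi_mul_I, sgn, if_pos ⟨q, hq⟩]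
  · have h : -Complex.I * n * (Real.pi : ℂ)
        = (-(q+1) : ℤ) * (2 * Real.pi * Complex.I) + (Real.pi * Complex.I) := by
      subst hq; push_cast; ring
    rw [h, Complex.exp_add, Complex.exp_int_mul_two_pi_mul_I, Complex.exp_pi_mul_I,
      sgn, if_neg (by rw [Int.not_even_iff_odd]; exact ⟨q, hq⟩)]
    ring

lemma hd_exp (μ : ℂ) (x : ℂ) :
    HasDerivAt (fun y : ℂ => Complex.exp (μ * y)) (μ * Complex.exp (μ * x)) x := by
  simpa [mul_comm] using (((hasDerivAt_id x).const_mul μ).cexp)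

lemma ed_exp {ι : Type*} (s : Finset ι) (c μ : ι → ℂ) (j : ℕ) (x : ℂ) :
    iteratedDeriv j (fun ξ : ℂ => ∑ t ∈ s, c t * Complex.exp (μ t * ξ)) x
      = ∑ t ∈ s, c t * μ t ^ j * Complex.exp (μ t * x) := by
  induction j generalizing x with
  | zero => simp
  | succ n ih =>
    rw [iteratedDeriv_succ]
    have h1 : iteratedDeriv n (fun ξ : ℂ => ∑ t ∈ s, c t * Complex.exp (μ t * ξ))
        = fun x => ∑ t ∈ s, c t * μ t ^ n * Complex.exp (μ t * x) := funext fun y => ih y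
    rw [h1, deriv_fun_sum (fun t _ => ((hd_exp (μ t) x).const_mul _).differentiableAt)]
    refine Finset.sum_congr rfl fun t _ => ?_
    rw [((hd_exp (μ t) x).const_mul (c t * μ t ^ n)).deriv]
    ring

lemma swap3 {α β γ M : Type*} [AddCommMonoid M] (A : Finset α) (B : Finset β) (Cs : Finset γ)
    (H : β → γ → α → M) :
    ∑ n ∈ A, ∑ i ∈ B, ∑ s ∈ Cs, H i s n = ∑ i ∈ B, ∑ s ∈ Cs, ∑ n ∈ A, H i s n := by
  rw [Finset.sum_comm]
  exact Finset.sum_congr rfl fun i _ => Finset.sum_comm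

lemma prod3 {r : ℕ} (T A : Finset ℤ) (F : Fin r → ℤ → ℤ → ℂ) :
    ∑ t ∈ (Finset.univ ×ˢ (T ×ˢ A) : Finset (Fin r × ℤ × ℤ)), F t.1 t.2.1 t.2.2
      = ∑ i : Fin r, ∑ s ∈ T, ∑ n ∈ A, F i s n := by
  rw [Finset.sum_product _ _ _]
  exact Finset.sum_congr rfl fun i _ => Finset.sum_product _ _ _

lemma key_to_keyP {ι : Type*} (s : Finset ι) (c w : ι → ℂ) (m : ℕ)
    (h : ∀ j ≤ m, ∑ t ∈ s, c t * w t ^ j = 0) (z : ℂ) :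
    ∑ t ∈ s, c t * (z - w t) ^ m = 0 := by
  have expand : ∀ u : ℂ, (z - u) ^ m
      = ∑ k ∈ Finset.range (m+1), u ^ k * ((-1 : ℂ) ^ k * z ^ (m - k) * (m.choose k)) := by
    intro u
    rw [sub_eq_add_neg, add_comm, add_pow]
    exact Finset.sum_congr rfl fun k _ => by rw [neg_pow]; ring
  calc ∑ t ∈ s, c t * (z - w t) ^ m
      = ∑ t ∈ s, ∑ k ∈ Finset.range (m+1),
          c t * w t ^ k * ((-1:ℂ)^k * z^(m-k) * (m.choose k)) := by
        refine Finset.sum_congr rfl fun t _ => ?_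
        rw [expand, Finset.mul_sum]
        exact Finset.sum_congr rfl fun k _ => by ring
    _ = ∑ k ∈ Finset.range (m+1), ∑ t ∈ s,
          c t * w t ^ k * ((-1:ℂ)^k * z^(m-k) * (m.choose k)) := Finset.sum_comm
    _ = 0 := by
        refine Finset.sum_eq_zero fun k hk => ?_
        rw [← Finset.sum_mul, h k (Nat.lt_succ_iff.mp (Finset.mem_range.mp hk)), zero_mul]

theorem stmt5 (r m : ℕ) (a : ℤ → Fin r → Fin r → ℂ)
    (ha : (Function.support a).Finite)
    (v : ℤ → Fin r → ℂ) (hv : (Function.support v).Finite)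
    (P : Fin r → Polynomial ℂ)
    (hPdef : ∀ ℓ, P ℓ = pconv (Polynomial.C ((Nat.factorial m : ℂ))⁻¹ * Polynomial.X ^ m)
      (fun k => v k ℓ))
    (hO : ∀ j ≤ m, ∀ ℓ : Fin r,
      iteratedDeriv j
        (fun ξ : ℂ => ∑ i : Fin r, symb (fun k => v k i) (2 * ξ) *
          symbM a i ℓ (ξ + (Real.pi : ℂ))) 0 = 0) :
    ∃ Q : Fin r → Polynomial ℂ,
      (∀ ℓ, (Q ℓ).natDegree ≤ m) ∧
      (∀ x : ℤ, ∀ ℓ, sd a (fun k i => (P i).eval ((k : ℤ) : ℂ)) x ℓ = (Q ℓ).eval ((x : ℂ))) ∧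
      (∀ ℓ, Q ℓ = ∑ᶠ k : ℤ, ∑ i : Fin r,
        a k i ℓ • ((P i).comp (Polynomial.C ((2 : ℂ))⁻¹ *
          (Polynomial.X - Polynomial.C ((k : ℂ)))))) := by
  classical
  set T : Finset ℤ := hv.toFinset with hT
  set A : Finset ℤ := ha.toFinset with hA
  -- P as a finite sum
  have hPsum : ∀ i : Fin r, P i = ∑ s ∈ T,
      (v s i) • ((Polynomial.C ((Nat.factorial m : ℂ))⁻¹ * Polynomial.X ^ m).comp
        (Polynomial.X - Polynomial.C (s : ℂ))) := by
    intro i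
    rw [hPdef i]
    unfold pconv
    refine finsum_eq_sum_of_support_subset _ fun k hk => ?_
    simp only [Function.mem_support] at hk
    have h1 : v k i ≠ 0 := by
      intro h0; exact hk (by rw [h0, zero_smul])
    have h2 : v k ≠ 0 := fun h0 => h1 (by rw [h0]; rfl)
    exact Finset.mem_coe.mpr (hv.mem_toFinset.mpr h2)
  have hPev : ∀ (i : Fin r) (z : ℂ), (P i).eval z
      = ∑ s ∈ T, v s i * ((Nat.factorial m : ℂ))⁻¹ * (z - (s : ℂ)) ^ m := by
    intro i z
    rw [hPsum i, Polynomial.eval_finset_sum]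
    refine Finset.sum_congr rfl fun s _ => ?_
    simp [Polynomial.smul_eq_C_mul, mul_assoc]
  have hPdeg : ∀ i : Fin r, (P i).natDegree ≤ m := by
    intro i
    rw [hPsum i]
    refine Polynomial.natDegree_sum_le_of_forall_le _ _ fun s _ => ?_
    refine (Polynomial.natDegree_smul_le _ _).trans (Polynomial.natDegree_comp_le.trans ?_)
    calc (Polynomial.C ((Nat.factorial m : ℂ))⁻¹ * Polynomial.X ^ m).natDegree *
          (Polynomial.X - Polynomial.C ((s:ℤ) : ℂ)).natDegree
        ≤ m * 1 := Nat.mul_le_mul (Polynomial.natDegree_mul_le.trans (by simp))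
          (le_of_eq (Polynomial.natDegree_X_sub_C _))
      _ = m := mul_one m
  -- the candidate Q
  refine ⟨fun ℓ => ∑ n ∈ A, ∑ i : Fin r,
    a n i ℓ • ((P i).comp (Polynomial.C ((2:ℂ))⁻¹ *
      (Polynomial.X - Polynomial.C ((n:ℤ) : ℂ)))), ?_, ?_, ?_⟩
  · -- degree bound
    intro ℓ
    refine Polynomial.natDegree_sum_le_of_forall_le _ _ fun n _ => ?_
    refine Polynomial.natDegree_sum_le_of_forall_le _ _ fun i _ => ?_
    refine (Polynomial.natDegree_smul_le _ _).trans (Polynomial.natDegree_comp_le.trans ?_)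
    calc (P i).natDegree * (Polynomial.C ((2:ℂ))⁻¹ *
            (Polynomial.X - Polynomial.C ((n:ℤ) : ℂ))).natDegree
        ≤ m * 1 := Nat.mul_le_mul (hPdeg i)
          (Polynomial.natDegree_mul_le.trans
            (by rw [Polynomial.natDegree_C, Polynomial.natDegree_X_sub_C]))
      _ = m := mul_one m
  · -- the evaluation identity
    intro x ℓ
    -- abbreviations
    set V : Finset (Fin r × ℤ × ℤ) := Finset.univ ×ˢ (T ×ˢ A) with hV
    -- symbol expansions
    have e1 : ∀ (i : Fin r) (ξ : ℂ), symb (fun k => v k i) (2 * ξ)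
        = ∑ s ∈ T, v s i * Complex.exp (-Complex.I * (s : ℂ) * (2 * ξ)) := by
      intro i ξ
      refine finsum_eq_sum_of_support_subset _ fun k hk => ?_
      simp only [Function.mem_support] at hk
      have h1 : v k i ≠ 0 := fun h0 => hk (by rw [h0, zero_mul])
      have h2 : v k ≠ 0 := fun h0 => h1 (by rw [h0]; rfl)
      exact Finset.mem_coe.mpr (hv.mem_toFinset.mpr h2)
    have e2 : ∀ (i : Fin r) (ξ : ℂ), symbM a i ℓ (ξ + (Real.pi : ℂ))
        = ∑ n ∈ A, a n i ℓ * Complex.exp (-Complex.I * (n : ℂ) * (ξ + (Real.pi : ℂ))) := by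
      intro i ξ
      refine finsum_eq_sum_of_support_subset _ fun k hk => ?_
      simp only [Function.mem_support] at hk
      have h1 : a k i ℓ ≠ 0 := fun h0 => hk (by rw [h0, zero_mul])
      have h2 : a k ≠ 0 := fun h0 => h1 (by rw [h0]; rfl)
      exact Finset.mem_coe.mpr (ha.mem_toFinset.mpr h2)
    -- the symbol product as a sum of exponentials
    have f_eq : (fun ξ : ℂ => ∑ i : Fin r, symb (fun k => v k i) (2 * ξ) *
          symbM a i ℓ (ξ + (Real.pi : ℂ)))
        = fun ξ : ℂ => ∑ t ∈ V, (v t.2.1 t.1 * a t.2.2 t.1 ℓ * sgn t.2.2) *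
            Complex.exp ((-Complex.I * (2 * (t.2.1 : ℂ) + (t.2.2 : ℂ))) * ξ) := by
      funext ξ
      rw [prod3 T A (fun i s n => (v s i * a n i ℓ * sgn n) *
        Complex.exp ((-Complex.I * (2 * (s : ℂ) + (n : ℂ))) * ξ))]
      refine Finset.sum_congr rfl fun i _ => ?_
      rw [e1 i ξ, e2 i ξ, Finset.sum_mul_sum]
      refine Finset.sum_congr rfl fun s _ => Finset.sum_congr rfl fun n _ => ?_
      rw [mul_mul_mul_comm, ← Complex.exp_add]
      have harg : -Complex.I * (s : ℂ) * (2 * ξ) + -Complex.I * (n : ℂ) * (ξ + (Real.pi : ℂ))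
          = (-Complex.I * (2 * (s : ℂ) + (n : ℂ))) * ξ
            + (-Complex.I * (n : ℂ) * (Real.pi : ℂ)) := by ring
      rw [harg, Complex.exp_add, exp_pi n]
      ring
    -- the vanishing moments
    have key : ∀ j ≤ m, ∑ t ∈ V, (v t.2.1 t.1 * a t.2.2 t.1 ℓ * sgn t.2.2) *
        (2 * (t.2.1 : ℂ) + (t.2.2 : ℂ)) ^ j = 0 := by
      intro j hj
      have h := hO j hj ℓ
      rw [f_eq, ed_exp] at h
      simp only [mul_zero, Complex.exp_zero, mul_one] at h
      have h2 : ∑ t ∈ V, (v t.2.1 t.1 * a t.2.2 t.1 ℓ * sgn t.2.2) *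
            (-Complex.I * (2 * (t.2.1 : ℂ) + (t.2.2 : ℂ))) ^ j
          = (-Complex.I) ^ j * ∑ t ∈ V, (v t.2.1 t.1 * a t.2.2 t.1 ℓ * sgn t.2.2) *
            (2 * (t.2.1 : ℂ) + (t.2.2 : ℂ)) ^ j := by
        rw [Finset.mul_sum]
        exact Finset.sum_congr rfl fun t _ => by rw [mul_pow]; ring
      rw [h2] at h
      exact (mul_eq_zero.mp h).resolve_left
        (pow_ne_zero _ (neg_ne_zero.mpr Complex.I_ne_zero))
    have hkPx : ∑ t ∈ V, (v t.2.1 t.1 * a t.2.2 t.1 ℓ * sgn t.2.2) *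
        (((x : ℤ) : ℂ) - (2 * (t.2.1 : ℂ) + (t.2.2 : ℂ))) ^ m = 0 :=
      key_to_keyP V (fun t => v t.2.1 t.1 * a t.2.2 t.1 ℓ * sgn t.2.2)
        (fun t => 2 * (t.2.1 : ℂ) + (t.2.2 : ℂ)) m key ((x : ℂ))
    -- the sequence c
    set cf : ℤ → ℂ := fun n => ∑ i : Fin r, ∑ s ∈ T,
      v s i * a n i ℓ * (((x : ℤ) : ℂ) - (n : ℂ) - 2 * (s : ℂ)) ^ m with hcf
    -- the alternating sum vanishes
    have d0 : ∑ n ∈ A, sgn (x - n) * cf n = 0 := by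
      calc ∑ n ∈ A, sgn (x - n) * cf n
          = ∑ n ∈ A, ∑ i : Fin r, ∑ s ∈ T, sgn x * (v s i * a n i ℓ * sgn n *
              (((x : ℤ) : ℂ) - (2 * (s : ℂ) + (n : ℂ))) ^ m) := by
            refine Finset.sum_congr rfl fun n _ => ?_
            rw [hcf, Finset.mul_sum]
            refine Finset.sum_congr rfl fun i _ => ?_
            rw [Finset.mul_sum]
            refine Finset.sum_congr rfl fun s _ => ?_
            have e : ((x : ℤ) : ℂ) - (n : ℂ) - 2 * (s : ℂ)
                = ((x : ℤ) : ℂ) - (2 * (s : ℂ) + (n : ℂ)) := by ring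
            rw [e, sgn_sub]
            ring
        _ = ∑ i : Fin r, ∑ s ∈ T, ∑ n ∈ A, sgn x * (v s i * a n i ℓ * sgn n *
              (((x : ℤ) : ℂ) - (2 * (s : ℂ) + (n : ℂ))) ^ m) := swap3 _ _ _ _
        _ = sgn x * ∑ i : Fin r, ∑ s ∈ T, ∑ n ∈ A, (v s i * a n i ℓ * sgn n *
              (((x : ℤ) : ℂ) - (2 * (s : ℂ) + (n : ℂ))) ^ m) := by
            simp only [Finset.mul_sum]
        _ = sgn x * ∑ t ∈ V, (v t.2.1 t.1 * a t.2.2 t.1 ℓ * sgn t.2.2) *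
              (((x : ℤ) : ℂ) - (2 * (t.2.1 : ℂ) + (t.2.2 : ℂ))) ^ m := by
            rw [prod3 T A (fun i s n => (v s i * a n i ℓ * sgn n) *
              (((x : ℤ) : ℂ) - (2 * (s : ℂ) + (n : ℂ))) ^ m)]
        _ = 0 := by rw [hkPx, mul_zero]
    -- splitting by parity
    have hmain : 2 * ∑ k ∈ A.image (fun n => (x - n) / 2), cf (x - 2 * k) = ∑ n ∈ A, cf n := by
      set K : Finset ℤ := A.image (fun n => (x - n) / 2) with hK
      set B : Finset ℤ := K.image (fun k => x - 2 * k) with hB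
      have himg : ∑ n ∈ B, cf n = ∑ k ∈ K, cf (x - 2 * k) :=
        Finset.sum_image (by intro y _ z _ h; have h' : x - 2 * y = x - 2 * z := h; omega)
      have hsub : A.filter (fun n => Even (x - n)) ⊆ B := by
        intro n hn
        rw [Finset.mem_filter] at hn
        obtain ⟨hnA, q, hq⟩ := hn
        rw [hB]
        refine Finset.mem_image.mpr ⟨(x - n) / 2, ?_, by omega⟩
        rw [hK]
        exact Finset.mem_image.mpr ⟨n, hnA, rfl⟩
      have hvan : ∀ n ∈ B, n ∉ A.filter (fun n => Even (x - n)) → cf n = 0 := by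
        intro n hnB hnA0
        rw [hB] at hnB
        obtain ⟨k, _, rfl⟩ := Finset.mem_image.mp hnB
        have heven : Even (x - (x - 2 * k)) := ⟨k, by ring⟩
        have hnA : (x - 2 * k) ∉ A := fun h =>
          hnA0 (Finset.mem_filter.mpr ⟨h, heven⟩)
        have ha0 : a (x - 2 * k) = 0 := by
          by_contra h0
          exact hnA (ha.mem_toFinset.mpr h0)
        rw [hcf]
        refine Finset.sum_eq_zero fun i _ => Finset.sum_eq_zero fun s _ => ?_
        rw [show a (x - 2 * k) i ℓ = 0 from by rw [ha0]; rfl]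
        ring
      have hBA0 : ∑ n ∈ A.filter (fun n => Even (x - n)), cf n = ∑ n ∈ B, cf n :=
        Finset.sum_subset hsub hvan
      have hsplit := Finset.sum_filter_add_sum_filter_not A (fun n => Even (x - n)) cf
      have hsplit2 := Finset.sum_filter_add_sum_filter_not A (fun n => Even (x - n))
        (fun n => sgn (x - n) * cf n)
      have hpos : ∑ n ∈ A.filter (fun n => Even (x - n)), sgn (x - n) * cf n
          = ∑ n ∈ A.filter (fun n => Even (x - n)), cf n := by
        refine Finset.sum_congr rfl fun n hn => ?_
        rw [Finset.mem_filter] at hn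
        rw [sgn, if_pos hn.2, one_mul]
      have hneg : ∑ n ∈ A.filter (fun n => ¬Even (x - n)), sgn (x - n) * cf n
          = -∑ n ∈ A.filter (fun n => ¬Even (x - n)), cf n := by
        rw [← Finset.sum_neg_distrib]
        refine Finset.sum_congr rfl fun n hn => ?_
        rw [Finset.mem_filter] at hn
        rw [sgn, if_neg hn.2]
        ring
      rw [hpos, hneg] at hsplit2
      rw [d0] at hsplit2
      rw [← himg, ← hBA0]
      linear_combination hsplit + hsplit2
    -- per-term identification of the subdivision sum
    have hgk : ∀ k : ℤ, (∑ i : Fin r, (P i).eval (((k : ℤ)) : ℂ) * a (x - 2 * k) i ℓ)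
        = ((Nat.factorial m : ℂ))⁻¹ * ((2 : ℂ)⁻¹) ^ m * cf (x - 2 * k) := by
      intro k
      rw [hcf, Finset.mul_sum]
      refine Finset.sum_congr rfl fun i _ => ?_
      rw [hPev i, Finset.sum_mul, Finset.mul_sum]
      refine Finset.sum_congr rfl fun s _ => ?_
      have e : ((x : ℤ) : ℂ) - ((x - 2 * k : ℤ) : ℂ) - 2 * (s : ℂ)
          = 2 * ((k : ℂ) - (s : ℂ)) := by push_cast; ring
      rw [e, mul_pow]
      have h21 : (2 : ℂ) ^ m * ((2 : ℂ)⁻¹) ^ m = 1 := by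
        rw [← mul_pow]; norm_num
      linear_combination (-(v s i * a (x - 2 * k) i ℓ * ((k : ℂ) - (s : ℂ)) ^ m *
        ((Nat.factorial m : ℂ))⁻¹)) * h21
    -- evaluation of Q at x
    have hQev : Polynomial.eval ((x : ℤ) : ℂ) (∑ n ∈ A, ∑ i : Fin r,
          a n i ℓ • ((P i).comp (Polynomial.C ((2:ℂ))⁻¹ *
            (Polynomial.X - Polynomial.C ((n:ℤ) : ℂ)))))
        = ((Nat.factorial m : ℂ))⁻¹ * ((2 : ℂ)⁻¹) ^ m * ∑ n ∈ A, cf n := by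
      rw [Polynomial.eval_finset_sum, Finset.mul_sum]
      refine Finset.sum_congr rfl fun n _ => ?_
      rw [Polynomial.eval_finset_sum, hcf, Finset.mul_sum]
      refine Finset.sum_congr rfl fun i _ => ?_
      rw [Polynomial.smul_eq_C_mul, Polynomial.eval_mul, Polynomial.eval_C,
        Polynomial.eval_comp, Polynomial.eval_mul, Polynomial.eval_C, Polynomial.eval_sub,
        Polynomial.eval_X, Polynomial.eval_C, hPev i, Finset.mul_sum, Finset.mul_sum]
      refine Finset.sum_congr rfl fun s _ => ?_
      have e : (2 : ℂ)⁻¹ * (((x : ℤ) : ℂ) - ((n : ℤ) : ℂ)) - (s : ℂ)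
          = (2 : ℂ)⁻¹ * (((x : ℤ) : ℂ) - (n : ℂ) - 2 * (s : ℂ)) := by ring
      rw [e, mul_pow]
      ring
    -- assemble
    show 2 * (∑ᶠ k : ℤ, ∑ i : Fin r, (P i).eval (((k : ℤ)) : ℂ) * a (x - 2 * k) i ℓ) = _
    have hsupp : (Function.support fun k : ℤ =>
        ∑ i : Fin r, (P i).eval (((k : ℤ)) : ℂ) * a (x - 2 * k) i ℓ)
        ⊆ ↑(A.image (fun n => (x - n) / 2)) := by
      intro k hk
      simp only [Function.mem_support] at hk
      have hane : a (x - 2 * k) ≠ 0 := by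
        intro h0
        refine hk (Finset.sum_eq_zero fun i _ => ?_)
        rw [show a (x - 2 * k) i ℓ = 0 from by rw [h0]; rfl, mul_zero]
      have hmem : (x - 2 * k) ∈ A := ha.mem_toFinset.mpr hane
      exact Finset.mem_coe.mpr (Finset.mem_image.mpr ⟨x - 2 * k, hmem, by omega⟩)
    rw [finsum_eq_sum_of_support_subset _ hsupp]
    calc 2 * ∑ k ∈ A.image (fun n => (x - n) / 2),
          ∑ i : Fin r, (P i).eval (((k : ℤ)) : ℂ) * a (x - 2 * k) i ℓ
        = 2 * ∑ k ∈ A.image (fun n => (x - n) / 2),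
            ((Nat.factorial m : ℂ))⁻¹ * ((2 : ℂ)⁻¹) ^ m * cf (x - 2 * k) := by
          rw [Finset.sum_congr rfl fun k _ => hgk k]
      _ = ((Nat.factorial m : ℂ))⁻¹ * ((2 : ℂ)⁻¹) ^ m *
            (2 * ∑ k ∈ A.image (fun n => (x - n) / 2), cf (x - 2 * k)) := by
          rw [← Finset.mul_sum]; ring
      _ = ((Nat.factorial m : ℂ))⁻¹ * ((2 : ℂ)⁻¹) ^ m * ∑ n ∈ A, cf n := by rw [hmain]
      _ = _ := hQev.symm
  · -- Q equals the finsum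
    intro ℓ
    refine (finsum_eq_sum_of_support_subset _ fun k hk => ?_).symm
    simp only [Function.mem_support] at hk
    have h2 : a k ≠ 0 := by
      intro h0
      refine hk (Finset.sum_eq_zero fun i _ => ?_)
      rw [show a k i ℓ = 0 from by rw [h0]; rfl, zero_smul]
    exact Finset.mem_coe.mpr (ha.mem_toFinset.mpr h2)
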